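/- Let n > e^5, let 1 < k < √n, let λ ⊢ n with Frobenius coordinates (a₁,...,a_m | b₁,...,b_m) and associated multiset 𝒫 = {a_j − k/2} ∪ {k/2 − b_j}. Then for every real x with |x| > k·√n·log n there exists a real y with |y − x| < √n such that ∑_{p ∈ 𝒫 : |p−x| < |x|/2} 1/|p − y| ≤ 4·√n·(log n)/|x| (that is, y is 4√n·log n-well-spaced for x with respect to 𝒫). -/
import Mathlib


/-- The `i`-th part of a partition (0-indexed, parts in decreasing order, `0` beyond the
number of parts). -/
def partNth (n : ℕ) (l : Nat.Partition n) (i : ℕ) : ℕ :=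
  ((l.parts.sort (· ≤ ·)).reverse.getD i 0)

/-- Diagonal length `m` of the partition: the number of `i` (0-indexed) with `λ_{i+1} ≥ i+1`. -/
def diagLen (n : ℕ) (l : Nat.Partition n) : ℕ :=
  ((Finset.range n).filter (fun i => i < partNth n l i)).card

/-- Number of parts of the conjugate partition `λ'` at 0-indexed position `i`, i.e.
`λ'_{i+1} = #{j : λ_j ≥ i+1}`. -/
def conjNth (n : ℕ) (l : Nat.Partition n) (i : ℕ) : ℕ :=
  ((Finset.range n).filter (fun j => i < partNth n l j)).card

/-- Frobenius coordinate `a_i = λ_i − i + 1/2` (1-indexed; here `i : ℕ` is 0-indexed). -/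
noncomputable def fA (n : ℕ) (l : Nat.Partition n) (i : ℕ) : ℝ :=
  (partNth n l i : ℝ) - i - 1/2

/-- Frobenius coordinate `b_i = λ′_i − i + 1/2` (1-indexed; here `i : ℕ` is 0-indexed). -/
noncomputable def fB (n : ℕ) (l : Nat.Partition n) (i : ℕ) : ℝ :=
  (conjNth n l i : ℝ) - i - 1/2

/-- The falling factorial `x^{k↓} = x(x−1)⋯(x−k+1)`. -/
noncomputable def fall (x : ℝ) (k : ℕ) : ℝ := ∏ i ∈ Finset.range k, (x - i)

/-- The multiset `𝒫 = {a_j − k/2 : 1 ≤ j ≤ m} ∪ {k/2 − b_j : 1 ≤ j ≤ m}` of poles. -/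
noncomputable def poleSet (n : ℕ) (l : Nat.Partition n) (k : ℕ) : Multiset ℝ :=
  ((Finset.range (diagLen n l)).val.map (fun j => fA n l j - (k : ℝ)/2)) +
    ((Finset.range (diagLen n l)).val.map (fun j => (k : ℝ)/2 - fB n l j))

open Finset

section Aux

lemma sum_getD_range (L : List ℕ) (n : ℕ) (h : L.length ≤ n) :
    ∑ i ∈ Finset.range n, L.getD i 0 = L.sum := by
  induction L generalizing n with
  | nil => simp
  | cons a L ih =>
    cases n with
    | zero => simp at h
    | succ n =>
      rw [Finset.sum_range_succ']
      simp only [List.getD_cons_succ, List.getD_cons_zero, List.sum_cons]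
      rw [ih n (by simpa using h)]
      omega

lemma parts_length_le (n : ℕ) (l : Nat.Partition n) :
    (l.parts.sort (· ≤ ·)).reverse.length ≤ n := by
  rw [List.length_reverse, Multiset.length_sort]
  have h1 : ∀ x ∈ l.parts, 1 ≤ x := fun x hx => l.parts_pos hx
  have := Multiset.card_nsmul_le_sum h1
  simpa [l.parts_sum] using this

lemma partNth_sum (n : ℕ) (l : Nat.Partition n) :
    ∑ i ∈ Finset.range n, partNth n l i = n := by
  unfold partNth
  rw [sum_getD_range _ _ (parts_length_le n l), List.sum_reverse]
  have h : ((l.parts.sort (· ≤ ·) : List ℕ) : Multiset ℕ) = l.parts := Multiset.sort_eq _ _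
  calc (l.parts.sort (· ≤ ·)).sum = (((l.parts.sort (· ≤ ·) : List ℕ) : Multiset ℕ)).sum := rfl
    _ = l.parts.sum := by rw [h]
    _ = n := l.parts_sum

lemma partNth_le (n : ℕ) (l : Nat.Partition n) (i : ℕ) : partNth n l i ≤ n := by
  unfold partNth
  set L := (l.parts.sort (· ≤ ·)).reverse with hL
  rcases lt_or_ge i L.length with h | h
  · rw [List.getD_eq_getElem _ _ h]
    have hmem : L[i] ∈ L := List.getElem_mem h
    have hmem2 : ∀ x ∈ L, x ∈ l.parts := by
      intro x hx
      rw [hL, List.mem_reverse] at hx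
      exact (Multiset.mem_sort _).1 hx
    have hmem' : L[i] ∈ l.parts := hmem2 _ hmem
    have := Multiset.single_le_sum (fun x _ => Nat.zero_le x) _ hmem'
    simpa [l.parts_sum] using this
  · rw [List.getD_eq_default _ _ h]
    exact Nat.zero_le n

lemma partNth_anti (n : ℕ) (l : Nat.Partition n) {i j : ℕ} (hij : i ≤ j) :
    partNth n l j ≤ partNth n l i := by
  unfold partNth
  set L := (l.parts.sort (· ≤ ·)).reverse with hL
  have hpair : L.Pairwise (fun a b => b ≤ a) := by
    rw [hL, List.pairwise_reverse]
    exact Multiset.pairwise_sort _ _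
  rcases lt_or_ge j L.length with h | h
  · have hi : i < L.length := lt_of_le_of_lt hij h
    rw [List.getD_eq_getElem _ _ h, List.getD_eq_getElem _ _ hi]
    rcases eq_or_lt_of_le hij with rfl | hij'
    · exact le_refl _
    · exact List.pairwise_iff_getElem.1 hpair i j hi h hij'
  · rw [List.getD_eq_default _ _ h]
    exact Nat.zero_le _

lemma diagLen_le (n : ℕ) (l : Nat.Partition n) : diagLen n l ≤ n := by
  unfold diagLen
  exact (Finset.card_filter_le _ _).trans (by simp)

lemma lt_partNth_of_lt_diagLen (n : ℕ) (l : Nat.Partition n) {j : ℕ} (hj : j < diagLen n l) :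
    j < partNth n l j := by
  by_contra h
  push_neg at h
  have hsub : (Finset.range n).filter (fun i => i < partNth n l i) ⊆ Finset.range j := by
    intro i hi
    rw [Finset.mem_filter] at hi
    rw [Finset.mem_range]
    by_contra hji
    push_neg at hji
    have := partNth_anti n l hji
    omega
  have := Finset.card_le_card hsub
  rw [Finset.card_range] at this
  unfold diagLen at hj
  omega

lemma lt_conjNth_of_lt_diagLen (n : ℕ) (l : Nat.Partition n) {j : ℕ} (hj : j < diagLen n l) :
    j < conjNth n l j := by
  have hjn : j < n := lt_of_lt_of_le hj (diagLen_le n l)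
  have hsub : Finset.range (j+1) ⊆ (Finset.range n).filter (fun i => j < partNth n l i) := by
    intro i hi
    rw [Finset.mem_range] at hi
    rw [Finset.mem_filter, Finset.mem_range]
    constructor
    · omega
    · have h1 := lt_partNth_of_lt_diagLen n l hj
      have h2 := partNth_anti n l (show i ≤ j by omega)
      omega
  have := Finset.card_le_card hsub
  rw [Finset.card_range] at this
  unfold conjNth
  omega

lemma conjNth_sum (n : ℕ) (l : Nat.Partition n) :
    ∑ j ∈ Finset.range n, conjNth n l j = n := by
  unfold conjNth
  have h1 : ∀ j, ((Finset.range n).filter (fun i => j < partNth n l i)).card =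
      ∑ i ∈ Finset.range n, if j < partNth n l i then 1 else 0 := fun j =>
    Finset.card_filter _ _
  simp only [h1]
  rw [Finset.sum_comm]
  have h2 : ∀ i, ∑ j ∈ Finset.range n, (if j < partNth n l i then 1 else 0) = partNth n l i := by
    intro i
    rw [← Finset.card_filter]
    have h3 : (Finset.range n).filter (fun j => j < partNth n l i)
        = Finset.range (partNth n l i) := by
      ext j
      simp only [Finset.mem_filter, Finset.mem_range]
      have := partNth_le n l i
      omega
    rw [h3, Finset.card_range]
  simp only [h2]
  exact partNth_sum n l

lemma harmonic_half (M : ℕ) :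
    ∑ j ∈ Finset.range (M + 1), (1 : ℝ) / ((j : ℝ) + 1/2) ≤ 2 + Real.log (2 * (M : ℝ) + 1) := by
  induction M with
  | zero =>
    simp only [Finset.range_one, Finset.sum_singleton, Nat.cast_zero]
    norm_num
  | succ M ih =>
    rw [Finset.sum_range_succ]
    have hb : (0:ℝ) < 2 * (M:ℝ) + 1 := by positivity
    have hc : (0:ℝ) < 2 * ((M:ℝ) + 1) + 1 := by positivity
    have hlog := Real.log_le_sub_one_of_pos (div_pos hb hc)
    rw [Real.log_div hb.ne' hc.ne'] at hlog
    have hdiv : (2 * (M:ℝ) + 1) / (2 * ((M:ℝ) + 1) + 1) - 1 = -(2 / (2 * (M:ℝ) + 3)) := by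
      field_simp
      ring
    have hstep : (1:ℝ) / (((M:ℝ) + 1) + 1/2) ≤
        Real.log (2 * ((M:ℝ) + 1) + 1) - Real.log (2 * (M:ℝ) + 1) := by
      rw [hdiv] at hlog
      have h2 : (1:ℝ) / (((M:ℝ) + 1) + 1/2) = 2 / (2 * (M:ℝ) + 3) := by
        rw [div_eq_div_iff (by positivity) (by positivity)]
        ring
      rw [h2]
      linarith
    push_cast
    push_cast at ih hstep
    linarith

lemma multiset_sum_swap (T : Multiset ℝ) (s : Finset ℕ) (f : ℕ → ℝ → ℝ) :
    ∑ i ∈ s, (T.map (f i)).sum = (T.map (fun p => ∑ i ∈ s, f i p)).sum := by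
  induction T using Multiset.induction_on with
  | empty => simp
  | cons a T ih => simp [Finset.sum_add_distrib, ih]

lemma pole_grid_sum (q : ℤ) (M : ℕ) :
    ∑ i ∈ Finset.range M, (1:ℝ) / |((q:ℝ) + 1/2) - (i:ℝ)| ≤
      2 * ∑ j ∈ Finset.range M, (1:ℝ) / ((j:ℝ) + 1/2) := by
  have hpos : ∀ j : ℕ, (0:ℝ) < (j:ℝ) + 1/2 := fun j => by positivity
  have hsum_nonneg : (0:ℝ) ≤ ∑ j ∈ Finset.range M, (1:ℝ) / ((j:ℝ) + 1/2) :=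
    Finset.sum_nonneg fun j _ => by positivity
  rcases Nat.eq_zero_or_pos M with rfl | hM1
  · simp
  rcases lt_or_ge q 0 with hq | hq
  · have hq'' : q ≤ -1 := by omega
    have hq' : (q:ℝ) ≤ -1 := by exact_mod_cast hq''
    have hb : ∀ i ∈ Finset.range M, (1:ℝ) / |((q:ℝ) + 1/2) - (i:ℝ)| ≤ 1 / ((i:ℝ) + 1/2) := by
      intro i _
      have hi0 : (0:ℝ) ≤ (i:ℝ) := Nat.cast_nonneg i
      have habs : |((q:ℝ) + 1/2) - (i:ℝ)| = (i:ℝ) - (q:ℝ) - 1/2 := by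
        rw [abs_of_neg (by linarith)]; ring
      rw [habs]
      exact one_div_le_one_div_of_le (hpos i) (by linarith)
    calc ∑ i ∈ Finset.range M, (1:ℝ) / |((q:ℝ) + 1/2) - (i:ℝ)|
        ≤ ∑ i ∈ Finset.range M, (1:ℝ) / ((i:ℝ) + 1/2) := Finset.sum_le_sum hb
      _ ≤ 2 * ∑ j ∈ Finset.range M, (1:ℝ) / ((j:ℝ) + 1/2) := by linarith
  · set Q : ℕ := q.toNat with hQdef
    have hQ : (Q:ℝ) = (q:ℝ) := by
      exact_mod_cast Int.toNat_of_nonneg hq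
    have habsle : ∀ i : ℕ, i ≤ Q → |((q:ℝ) + 1/2) - (i:ℝ)| = ((Q - i : ℕ):ℝ) + 1/2 := by
      intro i hiQ
      have hiQ' : (i:ℝ) ≤ (Q:ℝ) := by exact_mod_cast hiQ
      have hcast : ((Q - i : ℕ):ℝ) = (Q:ℝ) - (i:ℝ) := by
        push_cast [Nat.cast_sub hiQ]; ring
      rw [← hQ, abs_of_pos (by linarith), hcast]; ring
    have habsgt : ∀ i : ℕ, Q < i → |((q:ℝ) + 1/2) - (i:ℝ)| = ((i - Q - 1 : ℕ):ℝ) + 1/2 := by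
      intro i hiQ
      have hiQ' : (Q:ℝ) + 1 ≤ (i:ℝ) := by exact_mod_cast hiQ
      have hcast : ((i - Q - 1 : ℕ):ℝ) = (i:ℝ) - (Q:ℝ) - 1 := by
        have h : i - Q - 1 + (Q + 1) = i := by omega
        have := congrArg (Nat.cast (R := ℝ)) h
        push_cast at this
        linarith
      rw [← hQ, abs_of_neg (by linarith), hcast]; ring
    rcases le_or_gt M (Q + 1) with hMQ | hMQ
    · have hb : ∀ i ∈ Finset.range M, (1:ℝ) / |((q:ℝ) + 1/2) - (i:ℝ)| ≤
          1 / (((M - 1 - i : ℕ):ℝ) + 1/2) := by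
        intro i hi
        have hi' := Finset.mem_range.1 hi
        have hiQ : i ≤ Q := by omega
        rw [habsle i hiQ]
        apply one_div_le_one_div_of_le (hpos _)
        have h5 : (M - 1 - i : ℕ) ≤ (Q - i : ℕ) := by omega
        have := (Nat.cast_le (α := ℝ)).2 h5
        linarith
      calc ∑ i ∈ Finset.range M, (1:ℝ) / |((q:ℝ) + 1/2) - (i:ℝ)|
          ≤ ∑ i ∈ Finset.range M, (1:ℝ) / (((M - 1 - i : ℕ):ℝ) + 1/2) := Finset.sum_le_sum hb
        _ = ∑ j ∈ Finset.range M, (1:ℝ) / ((j:ℝ) + 1/2) :=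
            Finset.sum_range_reflect (fun j => (1:ℝ) / ((j:ℝ) + 1/2)) M
        _ ≤ 2 * ∑ j ∈ Finset.range M, (1:ℝ) / ((j:ℝ) + 1/2) := by linarith
    · have hsplit : ∑ i ∈ Finset.range M, (1:ℝ) / |((q:ℝ) + 1/2) - (i:ℝ)| =
          (∑ i ∈ Finset.range (Q+1), (1:ℝ) / |((q:ℝ) + 1/2) - (i:ℝ)|) +
          ∑ i ∈ Finset.Ico (Q+1) M, (1:ℝ) / |((q:ℝ) + 1/2) - (i:ℝ)| := by
        simp only [Finset.range_eq_Ico]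
        exact (Finset.sum_Ico_consecutive _ (Nat.zero_le _) hMQ.le).symm
      have h1 : ∑ i ∈ Finset.range (Q+1), (1:ℝ) / |((q:ℝ) + 1/2) - (i:ℝ)| ≤
          ∑ j ∈ Finset.range M, (1:ℝ) / ((j:ℝ) + 1/2) := by
        have he : ∀ i ∈ Finset.range (Q+1), (1:ℝ) / |((q:ℝ) + 1/2) - (i:ℝ)| =
            (1:ℝ) / (((Q + 1 - 1 - i : ℕ):ℝ) + 1/2) := by
          intro i hi
          have hi' := Finset.mem_range.1 hi
          rw [habsle i (by omega)]
          have h : Q + 1 - 1 - i = Q - i := by omega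
          rw [h]
        rw [Finset.sum_congr rfl he,
          Finset.sum_range_reflect (fun j => (1:ℝ) / ((j:ℝ) + 1/2)) (Q+1)]
        exact Finset.sum_le_sum_of_subset_of_nonneg
          (Finset.range_subset_range.2 hMQ.le) (fun j _ _ => by positivity)
      have h2 : ∑ i ∈ Finset.Ico (Q+1) M, (1:ℝ) / |((q:ℝ) + 1/2) - (i:ℝ)| ≤
          ∑ j ∈ Finset.range M, (1:ℝ) / ((j:ℝ) + 1/2) := by
        rw [Finset.sum_Ico_eq_sum_range]
        have he : ∀ j ∈ Finset.range (M - (Q+1)), (1:ℝ) / |((q:ℝ) + 1/2) - ((Q+1+j : ℕ):ℝ)| =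
            (1:ℝ) / ((j:ℝ) + 1/2) := by
          intro j _
          rw [habsgt (Q+1+j) (by omega)]
          have h : Q + 1 + j - Q - 1 = j := by omega
          rw [h]
        calc ∑ j ∈ Finset.range (M - (Q+1)), (1:ℝ) / |((q:ℝ) + 1/2) - ((Q+1+j : ℕ):ℝ)|
            = ∑ j ∈ Finset.range (M - (Q+1)), (1:ℝ) / ((j:ℝ) + 1/2) := Finset.sum_congr rfl he
          _ ≤ ∑ j ∈ Finset.range M, (1:ℝ) / ((j:ℝ) + 1/2) :=
              Finset.sum_le_sum_of_subset_of_nonneg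
                (Finset.range_subset_range.2 (by omega)) (fun j _ _ => by positivity)
      rw [hsplit]
      linarith

lemma card_filter_map_le (g : ℕ → ℝ) (c : ℝ) (m N : ℕ) (F : ℕ → ℕ) (cond : ℝ → Prop)
    [DecidablePred cond] (hmn : m ≤ N) (_hc : 0 ≤ c)
    (hF : ∀ j < m, cond (g j) → c ≤ (F j : ℝ))
    (hsum : ∑ i ∈ Finset.range N, F i = N) :
    (Multiset.card (Multiset.filter cond ((Finset.range m).val.map g)) : ℝ) * c ≤ N := by
  classical
  rw [Multiset.filter_map, Multiset.card_map]
  have hval : Multiset.filter (cond ∘ g) (Finset.range m).val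
      = ((Finset.range m).filter (fun j => cond (g j))).val := (Finset.filter_val _ _).symm
  rw [hval]
  have hcard : Multiset.card ((Finset.range m).filter (fun j => cond (g j))).val
      = ((Finset.range m).filter (fun j => cond (g j))).card := rfl
  rw [hcard]
  set FA := (Finset.range m).filter (fun j => cond (g j)) with hFA
  have hb : ∀ j ∈ FA, c ≤ (F j : ℝ) := by
    intro j hj
    rw [hFA, Finset.mem_filter, Finset.mem_range] at hj
    exact hF j hj.1 hj.2
  have h1 : (FA.card : ℝ) * c ≤ ∑ j ∈ FA, (F j : ℝ) := by
    have := Finset.card_nsmul_le_sum FA (fun j => (F j : ℝ)) c hb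
    simpa [nsmul_eq_mul] using this
  have h2 : ∑ j ∈ FA, (F j : ℝ) ≤ ∑ j ∈ Finset.range N, (F j : ℝ) := by
    apply Finset.sum_le_sum_of_subset_of_nonneg
    · exact (Finset.filter_subset _ _).trans (Finset.range_subset_range.2 hmn)
    · intro j _ _
      positivity
  have h3 : ∑ j ∈ Finset.range N, (F j : ℝ) = (N : ℝ) := by
    rw [← Nat.cast_sum, hsum]
  linarith

lemma final_numeric (nR s L X N C M : ℝ)
    (hn0 : 0 < nR) (hs0 : 0 < s) (hs2 : s^2 = nR) (hs12 : 12 < s)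
    (hL5 : 5 < L) (hX : 0 < X) (hM : 0 < M) (hMlb : 2*s - 2 ≤ M)
    (hN0 : 0 ≤ N) (hNX : N * X ≤ 2 * nR)
    (hC4 : 4 ≤ C) (hCub : C ≤ 6.78 + L) :
    N * C / M ≤ 4 * s * L / X := by
  rw [div_le_div_iff₀ hM hX]
  have h12s : 12 * s ≤ nR := by nlinarith
  have hL0 : (0:ℝ) < L := by linarith
  have hC0 : (0:ℝ) < C := by linarith
  have hstep1 : N * C * X ≤ 2 * nR * C := by nlinarith
  have hstep2 : 2 * nR * C ≤ 2 * nR * (6.78 + L) := by nlinarith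
  have hstep3 : 4 * s * L * (2*s - 2) ≤ 4 * s * L * M := by
    have h1 : (0:ℝ) ≤ 4 * s * L := by positivity
    nlinarith
  have hkey : 2 * nR * (6.78 + L) ≤ 4 * s * L * (2*s - 2) := by
    have hA : (0:ℝ) ≤ (nR - 12*s) * L := mul_nonneg (by linarith) hL0.le
    have hB : (0:ℝ) ≤ (L - 5) * nR := mul_nonneg (by linarith) hn0.le
    nlinarith [hs2]
  linarith

end Aux

/-- **Lemma (existence of well-spaced points).** Let `n > e⁵`, `1 < k < √n`, `λ ⊢ n`, and let
`𝒫` be the multiset `{a_j − k/2} ∪ {k/2 − b_j}`. Then for every real `x` with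
`|x| > k·√n·log n` there is a real `y` with `|y − x| < √n` such that
`∑_{p ∈ 𝒫, |p−x| < |x|/2} 1/|p − y| ≤ 4·√n·(log n)/|x|`,
i.e. `y` is `4√n·log n`-well-spaced for `x` with respect to `𝒫`. -/
theorem exists_well_spaced_point (n : ℕ) (hn : Real.exp 5 < (n : ℝ)) (k : ℕ)
    (hk1 : 1 < k) (hk2 : (k : ℝ) < Real.sqrt n) (l : Nat.Partition n)
    (x : ℝ) (hx : (k : ℝ) * Real.sqrt n * Real.log n < |x|) :
    ∃ y : ℝ, |y - x| < Real.sqrt n ∧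
      (((poleSet n l k).filter (fun p => |p - x| < |x| / 2)).map
        (fun p => 1 / |p - y|)).sum ≤ 4 * Real.sqrt n * Real.log n / |x| := by
  have hexp : (148:ℝ) < Real.exp 5 := by
    have h9 := Real.exp_one_gt_d9
    calc (148:ℝ) < 2.7182818283^5 := by norm_num
      _ ≤ (Real.exp 1)^5 := by
          apply pow_le_pow_left₀ (by norm_num) h9.le
      _ = Real.exp 5 := by
          rw [← Real.exp_nat_mul]
          norm_num
  have hn0 : (0:ℝ) < n := lt_trans (Real.exp_pos 5) hn
  set s : ℝ := Real.sqrt n with hsdef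
  have hs0 : 0 < s := Real.sqrt_pos.2 hn0
  have hs2 : s^2 = n := Real.sq_sqrt hn0.le
  have hn144 : (144:ℝ) < n := by linarith
  have hs12 : 12 < s := by nlinarith
  have h12s : 12 * s ≤ (n:ℝ) := by nlinarith
  have hlog5 : 5 < Real.log n := (Real.lt_log_iff_exp_lt hn0).2 hn
  have hlog0 : 0 < Real.log n := by linarith
  have hk2' : (2:ℝ) ≤ k := by exact_mod_cast hk1
  have hk0 : (0:ℝ) < k := by linarith
  have hsl1 : (1:ℝ) ≤ s * Real.log (n:ℝ) := by nlinarith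
  have hXpos : 0 < |x| := lt_trans (by positivity) hx
  have hkX : (k:ℝ) < |x| := by nlinarith
  set m := diagLen n l with hm
  have hfA : ∀ j, j < m → (1:ℝ)/2 ≤ fA n l j := by
    intro j hj
    have h := lt_partNth_of_lt_diagLen n l hj
    have h' : (j:ℝ) + 1 ≤ (partNth n l j : ℝ) := by exact_mod_cast h
    unfold fA; linarith
  have hfB : ∀ j, j < m → (1:ℝ)/2 ≤ fB n l j := by
    intro j hj
    have h := lt_conjNth_of_lt_diagLen n l hj
    have h' : (j:ℝ) + 1 ≤ (conjNth n l j : ℝ) := by exact_mod_cast h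
    unfold fB; linarith
  set Sf := (poleSet n l k).filter (fun p => |p - x| < |x| / 2) with hSfdef
  -- lattice structure of the poles
  have hlat : ∀ p ∈ Sf, ∃ q : ℤ, p = ((k:ℝ)+1)/2 + q := by
    intro p hp
    have hp' : p ∈ poleSet n l k := (Multiset.mem_filter.1 hp).1
    unfold poleSet at hp'
    rcases Multiset.mem_add.1 hp' with h | h
    · rcases Multiset.mem_map.1 h with ⟨j, hj, rfl⟩
      refine ⟨(partNth n l j : ℤ) - j - k - 1, ?_⟩
      unfold fA; push_cast; ring
    · rcases Multiset.mem_map.1 h with ⟨j, hj, rfl⟩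
      refine ⟨(j : ℤ) - conjNth n l j, ?_⟩
      unfold fB; push_cast; ring
  -- cardinality bound
  have hcard : (Multiset.card Sf : ℝ) * (|x| / 2) ≤ (n:ℝ) := by
    have hxne : x ≠ 0 := by
      intro h; rw [h] at hXpos; simp at hXpos
    rw [hSfdef]
    unfold poleSet
    rw [Multiset.filter_add, Multiset.card_add]
    rcases hxne.lt_or_gt with hneg | hpos
    · -- x < 0 : A-part is empty
      have habs : |x| = -x := abs_of_neg hneg
      have hA0 : Multiset.filter (fun p => |p - x| < |x| / 2)
          ((Finset.range m).val.map (fun j => fA n l j - (k : ℝ)/2)) = 0 := by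
        rw [Multiset.filter_eq_nil]
        intro p hp
        rcases Multiset.mem_map.1 hp with ⟨j, hj, rfl⟩
        have hj' : j < m := Finset.mem_range.1 hj
        have h1 := hfA j hj'
        intro hcon
        have h2 : fA n l j - (k:ℝ)/2 - x ≥ 1/2 - (k:ℝ)/2 + |x| := by
          rw [habs]; linarith
        have h3 := le_abs_self (fA n l j - (k:ℝ)/2 - x)
        have h4 : |fA n l j - (k:ℝ)/2 - x| < |x|/2 := hcon
        linarith
      rw [hA0]
      simp only [Multiset.card_zero, Nat.cast_zero, zero_add]
      refine card_filter_map_le _ _ _ _ (fun j => conjNth n l j) _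
        (diagLen_le n l) (by positivity) ?_ (conjNth_sum n l)
      intro j hj hcond
      have h1 : ((k : ℝ)/2 - fB n l j) - x < |x|/2 := lt_of_abs_lt hcond
      have h2 : fB n l j ≤ (conjNth n l j : ℝ) := by
        unfold fB
        have : (0:ℝ) ≤ (j:ℝ) + 1/2 := by positivity
        linarith
      show |x|/2 ≤ ((conjNth n l j : ℕ) : ℝ)
      rw [habs] at h1 ⊢
      linarith
    · -- x > 0 : B-part is empty
      have habs : |x| = x := abs_of_pos hpos
      have hB0 : Multiset.filter (fun p => |p - x| < |x| / 2)
          ((Finset.range m).val.map (fun j => (k : ℝ)/2 - fB n l j)) = 0 := by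
        rw [Multiset.filter_eq_nil]
        intro p hp
        rcases Multiset.mem_map.1 hp with ⟨j, hj, rfl⟩
        have hj' : j < m := Finset.mem_range.1 hj
        have h1 := hfB j hj'
        intro hcon
        have h2 : x - ((k : ℝ)/2 - fB n l j) > x/2 := by
          rw [habs] at hkX
          linarith
        have h3 := le_abs_self (x - ((k : ℝ)/2 - fB n l j))
        rw [abs_sub_comm] at h3
        have h4 : |(k : ℝ)/2 - fB n l j - x| < |x|/2 := hcon
        rw [habs] at h4
        linarith
      rw [hB0]
      simp only [Multiset.card_zero, Nat.cast_zero, add_zero]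
      refine card_filter_map_le _ _ _ _ (fun j => partNth n l j) _
        (diagLen_le n l) (by positivity) ?_ (partNth_sum n l)
      intro j hj hcond
      have h1 : -(|x|/2) < (fA n l j - (k : ℝ)/2) - x := neg_lt_of_abs_lt hcond
      have h2 : fA n l j ≤ (partNth n l j : ℝ) := by
        unfold fA
        have : (0:ℝ) ≤ (j:ℝ) + 1/2 := by positivity
        linarith
      show |x|/2 ≤ ((partNth n l j : ℕ) : ℝ)
      rw [habs] at h1 ⊢
      linarith
  -- the candidate points
  set M : ℕ := ⌊2*s⌋₊ - 1 with hMdef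
  have hfl1 : (⌊2*s⌋₊:ℝ) ≤ 2*s := Nat.floor_le (by positivity)
  have hfl2 : 2*s < (⌊2*s⌋₊:ℝ) + 1 := Nat.lt_floor_add_one _
  have h24 : 24 ≤ ⌊2*s⌋₊ := Nat.le_floor (by push_cast; linarith)
  have hMcast : (M:ℝ) = (⌊2*s⌋₊:ℝ) - 1 := by
    rw [hMdef, Nat.cast_sub (by omega : 1 ≤ ⌊2*s⌋₊), Nat.cast_one]
  have hMlb : 2*s - 2 ≤ (M:ℝ) := by rw [hMcast]; linarith
  have hMub : (M:ℝ) ≤ 2*s - 1 := by rw [hMcast]; linarith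
  have hM0 : 0 < M := by omega
  have hMposR : (0:ℝ) < (M:ℝ) := by rw [hMcast]; push_cast; linarith
  set b0 : ℤ := ⌊x - s - ((k:ℝ)+1)/2 - 1/2⌋ + 1 with hb0def
  set y : ℕ → ℝ := fun i => ((k:ℝ)+1)/2 + 1/2 + (b0:ℝ) + i with hydef
  have hb0lb : x - s - ((k:ℝ)+1)/2 - 1/2 < (b0:ℝ) := by
    rw [hb0def]; push_cast
    exact Int.lt_floor_add_one _
  have hb0ub : (b0:ℝ) ≤ x - s - ((k:ℝ)+1)/2 - 1/2 + 1 := by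
    rw [hb0def]; push_cast
    have := Int.floor_le (x - s - ((k:ℝ)+1)/2 - 1/2)
    linarith
  have hy : ∀ i ∈ Finset.range M, |y i - x| < s := by
    intro i hi
    have hi' : (i:ℝ) + 1 ≤ (M:ℝ) := by exact_mod_cast Finset.mem_range.1 hi
    have hi0 : (0:ℝ) ≤ (i:ℝ) := Nat.cast_nonneg i
    rw [hydef]
    rw [abs_lt]
    constructor
    · simp only
      linarith
    · simp only
      linarith
  -- per-pole bound
  set C : ℝ := 2 * (2 + Real.log (2*(M:ℝ)+1)) with hCdef
  have hharm : ∑ j ∈ Finset.range M, (1:ℝ)/((j:ℝ)+1/2) ≤ 2 + Real.log (2*(M:ℝ)+1) := by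
    have h1 : ∑ j ∈ Finset.range M, (1:ℝ)/((j:ℝ)+1/2)
        ≤ ∑ j ∈ Finset.range (M+1), (1:ℝ)/((j:ℝ)+1/2) := by
      rw [Finset.sum_range_succ]
      have : (0:ℝ) ≤ 1/((M:ℝ)+1/2) := by positivity
      linarith
    exact h1.trans (harmonic_half M)
  have hper : ∀ p ∈ Sf, ∑ i ∈ Finset.range M, (1:ℝ)/|p - y i| ≤ C := by
    intro p hp
    obtain ⟨q, hq⟩ := hlat p hp
    have heq : ∀ i : ℕ, p - y i = ((q - b0 - 1 : ℤ):ℝ) + 1/2 - (i:ℝ) := by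
      intro i
      rw [hq, hydef]
      push_cast
      ring
    calc ∑ i ∈ Finset.range M, (1:ℝ)/|p - y i|
        = ∑ i ∈ Finset.range M, (1:ℝ)/|((q - b0 - 1 : ℤ):ℝ) + 1/2 - (i:ℝ)| :=
          Finset.sum_congr rfl (fun i _ => by rw [heq i])
      _ ≤ 2 * ∑ j ∈ Finset.range M, (1:ℝ)/((j:ℝ)+1/2) := pole_grid_sum _ M
      _ ≤ C := by rw [hCdef]; linarith
  -- total bound and pigeonhole
  have htot : ∑ i ∈ Finset.range M, ((Sf.map (fun p => 1/|p - y i|)).sum)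
      ≤ (Multiset.card Sf : ℝ) * C := by
    rw [multiset_sum_swap Sf (Finset.range M) (fun i p => 1/|p - y i|)]
    calc (Sf.map (fun p => ∑ i ∈ Finset.range M, 1/|p - y i|)).sum
        ≤ (Sf.map (fun _ => C)).sum :=
          Multiset.sum_map_le_sum_map _ _ (fun p hp => hper p hp)
      _ = (Multiset.card Sf : ℝ) * C := by
          rw [Multiset.map_const', Multiset.sum_replicate, nsmul_eq_mul]
  have hex : ∃ i ∈ Finset.range M,
      ((Sf.map (fun p => 1/|p - y i|)).sum) ≤ (Multiset.card Sf : ℝ) * C / M := by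
    apply Finset.exists_le_of_sum_le (Finset.nonempty_range_iff.2 hM0.ne')
    rw [Finset.sum_const, Finset.card_range, nsmul_eq_mul]
    rw [mul_div_cancel₀]
    · exact htot
    · exact hMposR.ne'
  obtain ⟨i, hi, hTi⟩ := hex
  -- final numeric bound
  have hC4 : 4 ≤ C := by
    rw [hCdef]
    have : 0 ≤ Real.log (2*(M:ℝ)+1) := Real.log_nonneg (by linarith)
    linarith
  have hCub : C ≤ 6.78 + Real.log n := by
    rw [hCdef]
    have h1 : Real.log (2*(M:ℝ)+1) ≤ Real.log (4*s) := by
      apply Real.log_le_log (by linarith)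
      linarith
    have h2 : Real.log (4*s) = Real.log 4 + Real.log s :=
      Real.log_mul (by norm_num) hs0.ne'
    have h3 : Real.log s = Real.log n / 2 := by
      rw [hsdef]; exact Real.log_sqrt hn0.le
    have h4 : Real.log 4 = 2 * Real.log 2 := by
      rw [show (4:ℝ) = 2^2 by norm_num, Real.log_pow]
      push_cast; ring
    have h5 := Real.log_two_lt_d9
    linarith
  have hNX : (Multiset.card Sf : ℝ) * |x| ≤ 2 * n := by linarith
  have hN0 : (0:ℝ) ≤ (Multiset.card Sf : ℝ) := Nat.cast_nonneg _
  have hfinal : (Multiset.card Sf : ℝ) * C / M ≤ 4 * s * Real.log n / |x| :=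
    final_numeric (n:ℝ) s (Real.log n) |x| (Multiset.card Sf : ℝ) C (M:ℝ)
      hn0 hs0 hs2 hs12 hlog5 hXpos hMposR hMlb hN0 hNX hC4 hCub
  exact ⟨y i, hy i hi, le_trans hTi hfinal⟩
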